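/- Let (A, ≻_A, ≺_A, Δ_≻, Δ_≺) be a finite-dimensional anti-dendriform bialgebra with double D = A ⊕ A*, and r = Σᵢ eᵢ ⊗ eᵢ* ∈ D⊗D for a basis {eᵢ} of A with dual basis {eᵢ*}. Then r + τ(r) is invariant in (D, ≻_D, ≺_D) and T_{r+τ(r)} : D* → D, given by T_{r+τ(r)}(ζ, x) = (ζ, -x) under the identification D* ≅ A*⊕A, is a linear isomorphism; hence (D, ≻_D, ≺_D, Δ_{≻,r}, Δ_{≺,r}) is a factorizable anti-dendriform bialgebra. -/

import Mathlib

open TensorProduct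

set_option synthInstance.maxHeartbeats 1000000
set_option maxHeartbeats 1600000

variable {K : Type*} [Field K]

/-- The anti-dendriform algebra identities for two bilinear operations `s` (≻) and `p` (≺):
`x≻(y≻z) = -(x·y)≻z = -x≺(y·z) = (x≺y)≺z` and `(x≻y)≺z = x≻(y≺z)`, where `x·y = x≻y + x≺y`. -/
def IsAntiDend {M : Type*} [AddCommGroup M] [Module K M]
    (s p : M →ₗ[K] M →ₗ[K] M) : Prop :=
  ∀ x y z : M,
    s x (s y z) = - s (s x y + p x y) z ∧
    s x (s y z) = - p x (s y z + p y z) ∧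
    s x (s y z) = p (p x y) z ∧
    p (s x y) z = s x (p y z)

/-- The bilinear map `a ⊗ b ↦ (ζ ↦ ζ(a) • b)` used to define `T_r`. -/
noncomputable def Tbil {M : Type*} [AddCommGroup M] [Module K M] :
    M →ₗ[K] M →ₗ[K] (Module.Dual K M →ₗ[K] M) :=
  LinearMap.mk₂ K (fun a b => (Module.Dual.eval K M a).smulRight b)
    (fun a a' b => by ext ζ; simp [add_smul])
    (fun c a b => by
      ext ζ
      simp only [LinearMap.smulRight_apply, LinearMap.smul_apply, map_smul,
        Module.Dual.eval_apply, smul_eq_mul, mul_smul])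
    (fun a b b' => by ext ζ; simp)
    (fun c a b => by
      ext ζ
      simp only [LinearMap.smulRight_apply, LinearMap.smul_apply]
      exact smul_comm _ _ _)

/-- `T_r : A* → A`, `⟨T_r ζ, η⟩ = ⟨r, ζ ⊗ η⟩`; concretely `T_r ζ = Σ ζ(aᵢ) • bᵢ`
for `r = Σ aᵢ ⊗ bᵢ`. -/
noncomputable def TmL {M : Type*} [AddCommGroup M] [Module K M] (r : M ⊗[K] M) :
    Module.Dual K M →ₗ[K] M :=
  TensorProduct.lift Tbil r

/-- The flip `τ : A ⊗ A → A ⊗ A`. -/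
noncomputable def tau {M : Type*} [AddCommGroup M] [Module K M] (r : M ⊗[K] M) : M ⊗[K] M :=
  TensorProduct.comm K M M r

/-- `r` is invariant: `(R_≺(x)⊗I + I⊗L_·(x)) r = 0` and `(R_·(x)⊗I + I⊗L_≻(x)) r = 0`. -/
def Invariant {M : Type*} [AddCommGroup M] [Module K M]
    (s p : M →ₗ[K] M →ₗ[K] M) (r : M ⊗[K] M) : Prop :=
  ∀ x : M,
    TensorProduct.map (p.flip x) (LinearMap.id : M →ₗ[K] M) r
      + TensorProduct.map (LinearMap.id : M →ₗ[K] M) ((s + p) x) r = 0 ∧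
    TensorProduct.map ((s + p).flip x) (LinearMap.id : M →ₗ[K] M) r
      + TensorProduct.map (LinearMap.id : M →ₗ[K] M) (s x) r = 0

/-- `(a⊗b)⊗(c⊗d) ↦ (m a c) ⊗ b ⊗ d` : the product is placed in the first tensor slot,
giving `r₁₂ ∗ r₁₃` when applied to `r ⊗ r`. -/
noncomputable def place1 {M : Type*} [AddCommGroup M] [Module K M]
    (m : M →ₗ[K] M →ₗ[K] M) :
    (M ⊗[K] M) ⊗[K] (M ⊗[K] M) →ₗ[K] M ⊗[K] (M ⊗[K] M) :=
  (TensorProduct.map (TensorProduct.lift m)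
      (LinearMap.id : M ⊗[K] M →ₗ[K] M ⊗[K] M)) ∘ₗ
    (TensorProduct.tensorTensorTensorComm K M M M M).toLinearMap

/-- `(a⊗b)⊗(c⊗d) ↦ c ⊗ (m a d) ⊗ b` : the product in the second slot, giving `r₂₃ ∗ r₁₂`. -/
noncomputable def place2 {M : Type*} [AddCommGroup M] [Module K M]
    (m : M →ₗ[K] M →ₗ[K] M) :
    (M ⊗[K] M) ⊗[K] (M ⊗[K] M) →ₗ[K] M ⊗[K] (M ⊗[K] M) :=
  (TensorProduct.leftComm K M M M).toLinearMap ∘ₗ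
  (TensorProduct.map (LinearMap.id : M →ₗ[K] M) (TensorProduct.comm K M M).toLinearMap) ∘ₗ
  (TensorProduct.map (TensorProduct.lift m)
      (LinearMap.id : M ⊗[K] M →ₗ[K] M ⊗[K] M)) ∘ₗ
  (TensorProduct.tensorTensorTensorComm K M M M M).toLinearMap ∘ₗ
  (TensorProduct.congr (LinearEquiv.refl K (M ⊗[K] M)) (TensorProduct.comm K M M)).toLinearMap

/-- `(a⊗b)⊗(c⊗d) ↦ a ⊗ c ⊗ (m b d)` : the product in the third slot, giving `r₁₃ ∗ r₂₃`. -/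
noncomputable def place3 {M : Type*} [AddCommGroup M] [Module K M]
    (m : M →ₗ[K] M →ₗ[K] M) :
    (M ⊗[K] M) ⊗[K] (M ⊗[K] M) →ₗ[K] M ⊗[K] (M ⊗[K] M) :=
  (TensorProduct.assoc K M M M).toLinearMap ∘ₗ
  (TensorProduct.map (LinearMap.id : M ⊗[K] M →ₗ[K] M ⊗[K] M) (TensorProduct.lift m)) ∘ₗ
  (TensorProduct.tensorTensorTensorComm K M M M M).toLinearMap

/-- `D(r) = r₁₂·r₁₃ + r₂₃≻r₁₂ - r₁₃≺r₂₃`. -/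
noncomputable def adD {M : Type*} [AddCommGroup M] [Module K M]
    (s p : M →ₗ[K] M →ₗ[K] M) (r : M ⊗[K] M) : M ⊗[K] (M ⊗[K] M) :=
  place1 (s + p) (r ⊗ₜ[K] r) + place2 s (r ⊗ₜ[K] r) - place3 p (r ⊗ₜ[K] r)

/-- `D₁(r) = r₂₃·r₁₂ + r₁₃≻r₂₃ + r₁₂≺r₁₃`. -/
noncomputable def adD1 {M : Type*} [AddCommGroup M] [Module K M]
    (s p : M →ₗ[K] M →ₗ[K] M) (r : M ⊗[K] M) : M ⊗[K] (M ⊗[K] M) :=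
  place2 (s + p) (r ⊗ₜ[K] r) + place3 s (r ⊗ₜ[K] r) + place1 p (r ⊗ₜ[K] r)

/-- `D₂(r) = r₁₃·r₂₃ - r₁₂≻r₁₃ + r₂₃≺r₁₂`. -/
noncomputable def adD2 {M : Type*} [AddCommGroup M] [Module K M]
    (s p : M →ₗ[K] M →ₗ[K] M) (r : M ⊗[K] M) : M ⊗[K] (M ⊗[K] M) :=
  place3 (s + p) (r ⊗ₜ[K] r) - place1 s (r ⊗ₜ[K] r) + place2 p (r ⊗ₜ[K] r)

/-- The anti-dendriform Yang-Baxter equation `D(r) = 0`. -/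
noncomputable def AYBE {M : Type*} [AddCommGroup M] [Module K M]
    (s p : M →ₗ[K] M →ₗ[K] M) (r : M ⊗[K] M) : Prop :=
  adD s p r = 0

section Double

variable (A : Type*) [AddCommGroup A] [Module K A] [FiniteDimensional K A]

/-- For an operation `m` on `A*`, the coadjoint operator `a ↦ R_m(a)*` acting on
`A ≅ A**`. -/
noncomputable def RstarB
    (m : Module.Dual K A →ₗ[K] Module.Dual K A →ₗ[K] Module.Dual K A) :
    Module.Dual K A →ₗ[K] (A →ₗ[K] A) :=
  (((Module.evalEquiv K A).symm.conj).toLinearMap :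
      Module.End K (Module.Dual K (Module.Dual K A)) →ₗ[K] Module.End K A) ∘ₗ
    (Module.Dual.transpose :
      (Module.Dual K A →ₗ[K] Module.Dual K A) →ₗ[K]
        (Module.Dual K (Module.Dual K A) →ₗ[K] Module.Dual K (Module.Dual K A))) ∘ₗ
    m.flip

/-- For an operation `m` on `A*`, the coadjoint operator `a ↦ L_m(a)*` acting on
`A ≅ A**`. -/
noncomputable def LstarB
    (m : Module.Dual K A →ₗ[K] Module.Dual K A →ₗ[K] Module.Dual K A) :
    Module.Dual K A →ₗ[K] (A →ₗ[K] A) :=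
  (((Module.evalEquiv K A).symm.conj).toLinearMap :
      Module.End K (Module.Dual K (Module.Dual K A)) →ₗ[K] Module.End K A) ∘ₗ
    (Module.Dual.transpose :
      (Module.Dual K A →ₗ[K] Module.Dual K A) →ₗ[K]
        (Module.Dual K (Module.Dual K A) →ₗ[K] Module.Dual K (Module.Dual K A))) ∘ₗ
    m

/-- For an operation `m` on `A`, the operator `x ↦ L_m(x)*` on `A*`. -/
noncomputable def LstarA (m : A →ₗ[K] A →ₗ[K] A) :
    A →ₗ[K] (Module.Dual K A →ₗ[K] Module.Dual K A) :=
  Module.Dual.transpose ∘ₗ m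

/-- For an operation `m` on `A`, the operator `x ↦ R_m(x)*` on `A*`. -/
noncomputable def RstarA (m : A →ₗ[K] A →ₗ[K] A) :
    A →ₗ[K] (Module.Dual K A →ₗ[K] Module.Dual K A) :=
  Module.Dual.transpose ∘ₗ m.flip

variable {A}

/-- The product `≻_D` of the double `D = A ⊕ A*`:
`(x+a) ≻_D (y+b) = x ≻ y - (R*_≺,A* + R*_≻,A*)(a) y + L*_≺,A*(b) x
  + a ≻_{A*} b - (R*_≺,A + R*_≻,A)(x) b + L*_≺,A(y) a`. -/
noncomputable def succD (sA pA : A →ₗ[K] A →ₗ[K] A)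
    (sB pB : Module.Dual K A →ₗ[K] Module.Dual K A →ₗ[K] Module.Dual K A) :
    (A × Module.Dual K A) →ₗ[K] (A × Module.Dual K A) →ₗ[K] (A × Module.Dual K A) :=
  ((sA.compl₁₂ (LinearMap.fst K A (Module.Dual K A)) (LinearMap.fst K A (Module.Dual K A))).compr₂
      (LinearMap.inl K A (Module.Dual K A)))
    + (((RstarB A pB + RstarB A sB).compl₁₂ (LinearMap.snd K A (Module.Dual K A))
        (LinearMap.fst K A (Module.Dual K A))).compr₂ (-(LinearMap.inl K A (Module.Dual K A))))
    + (((LstarB A pB).flip.compl₁₂ (LinearMap.fst K A (Module.Dual K A))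
        (LinearMap.snd K A (Module.Dual K A))).compr₂ (LinearMap.inl K A (Module.Dual K A)))
    + ((sB.compl₁₂ (LinearMap.snd K A (Module.Dual K A)) (LinearMap.snd K A (Module.Dual K A))).compr₂
        (LinearMap.inr K A (Module.Dual K A)))
    + (((RstarA A pA + RstarA A sA).compl₁₂ (LinearMap.fst K A (Module.Dual K A))
        (LinearMap.snd K A (Module.Dual K A))).compr₂ (-(LinearMap.inr K A (Module.Dual K A))))
    + (((LstarA A pA).flip.compl₁₂ (LinearMap.snd K A (Module.Dual K A))
        (LinearMap.fst K A (Module.Dual K A))).compr₂ (LinearMap.inr K A (Module.Dual K A)))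

/-- The product `≺_D` of the double `D = A ⊕ A*`:
`(x+a) ≺_D (y+b) = x ≺ y + R*_≻,A*(a) y - (L*_≺,A* + L*_≻,A*)(b) x
  + a ≺_{A*} b + R*_≻,A(x) b - (L*_≺,A + L*_≻,A)(y) a`. -/
noncomputable def precD (sA pA : A →ₗ[K] A →ₗ[K] A)
    (sB pB : Module.Dual K A →ₗ[K] Module.Dual K A →ₗ[K] Module.Dual K A) :
    (A × Module.Dual K A) →ₗ[K] (A × Module.Dual K A) →ₗ[K] (A × Module.Dual K A) :=
  ((pA.compl₁₂ (LinearMap.fst K A (Module.Dual K A)) (LinearMap.fst K A (Module.Dual K A))).compr₂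
      (LinearMap.inl K A (Module.Dual K A)))
    + (((RstarB A sB).compl₁₂ (LinearMap.snd K A (Module.Dual K A))
        (LinearMap.fst K A (Module.Dual K A))).compr₂ (LinearMap.inl K A (Module.Dual K A)))
    + (((LstarB A pB + LstarB A sB).flip.compl₁₂ (LinearMap.fst K A (Module.Dual K A))
        (LinearMap.snd K A (Module.Dual K A))).compr₂ (-(LinearMap.inl K A (Module.Dual K A))))
    + ((pB.compl₁₂ (LinearMap.snd K A (Module.Dual K A)) (LinearMap.snd K A (Module.Dual K A))).compr₂
        (LinearMap.inr K A (Module.Dual K A)))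
    + (((RstarA A sA).compl₁₂ (LinearMap.fst K A (Module.Dual K A))
        (LinearMap.snd K A (Module.Dual K A))).compr₂ (LinearMap.inr K A (Module.Dual K A)))
    + (((LstarA A pA + LstarA A sA).flip.compl₁₂ (LinearMap.snd K A (Module.Dual K A))
        (LinearMap.fst K A (Module.Dual K A))).compr₂ (-(LinearMap.inr K A (Module.Dual K A))))

end Double

variable {A : Type*} [AddCommGroup A] [Module K A]

set_option linter.unusedSectionVars false
section Helpers
variable {K : Type*} [Field K] {A : Type*} [AddCommGroup A] [Module K A] [FiniteDimensional K A]
variable {ι : Type*} [Fintype ι] (b : Module.Basis ι K A)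
variable (sA pA : A →ₗ[K] A →ₗ[K] A)
    (sB pB : Module.Dual K A →ₗ[K] Module.Dual K A →ₗ[K] Module.Dual K A)

lemma succD_apply (x y : A) (a c : Module.Dual K A) :
    succD sA pA sB pB (x, a) (y, c)
      = (sA x y - (RstarB A pB a y + RstarB A sB a y) + LstarB A pB c x,
         sB a c - (RstarA A pA x c + RstarA A sA x c) + LstarA A pA y a) := by
  simp [succD, Prod.ext_iff]
  constructor <;> abel

lemma precD_apply (x y : A) (a c : Module.Dual K A) :
    precD sA pA sB pB (x, a) (y, c)
      = (pA x y + RstarB A sB a y - (LstarB A pB c x + LstarB A sB c x),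
         pB a c + RstarA A sA x c - (LstarA A pA y a + LstarA A sA y a)) := by
  simp [precD, Prod.ext_iff]
  constructor <;> abel

lemma repr_RstarB (m : Module.Dual K A →ₗ[K] Module.Dual K A →ₗ[K] Module.Dual K A)
    (a : Module.Dual K A) (y : A) (k : ι) :
    b.repr (RstarB A m a y) k = m (b.coord k) a y := by
  rw [← Module.Basis.coord_apply]
  simp [RstarB, LinearEquiv.conj_apply, Module.Dual.transpose_apply]

lemma repr_LstarB (m : Module.Dual K A →ₗ[K] Module.Dual K A →ₗ[K] Module.Dual K A)
    (a : Module.Dual K A) (y : A) (k : ι) :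
    b.repr (LstarB A m a y) k = m a (b.coord k) y := by
  rw [← Module.Basis.coord_apply]
  simp [LstarB, LinearEquiv.conj_apply, Module.Dual.transpose_apply]

lemma RstarA_pair (m : A →ₗ[K] A →ₗ[K] A) (x : A) (ζ : Module.Dual K A) (z : A) :
    RstarA A m x ζ z = ζ (m z x) := by
  simp [RstarA, Module.Dual.transpose_apply]

lemma LstarA_pair (m : A →ₗ[K] A →ₗ[K] A) (x : A) (ζ : Module.Dual K A) (z : A) :
    LstarA A m x ζ z = ζ (m x z) := by
  simp [LstarA, Module.Dual.transpose_apply]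

end Helpers

set_option linter.unusedSectionVars false
section Helpers
variable {K : Type*} [Field K] {A : Type*} [AddCommGroup A] [Module K A] [FiniteDimensional K A]
variable {ι : Type*} [Fintype ι] (b : Module.Basis ι K A)

lemma TmL_S_apply (ζ : Module.Dual K (A × Module.Dual K A)) :
    TmL ((∑ i : ι, ((b i, 0) : A × Module.Dual K A) ⊗ₜ[K] ((0, b.coord i) : A × Module.Dual K A)) +
        tau (∑ i : ι, ((b i, 0) : A × Module.Dual K A) ⊗ₜ[K] ((0, b.coord i) : A × Module.Dual K A))) ζ
      = (∑ i : ι, ζ (0, b.coord i) • b i, ∑ i : ι, ζ (b i, 0) • b.coord i) := by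
  simp [TmL, tau, Tbil, Prod.ext_iff, map_sum, Prod.smul_mk]
  constructor
  · rw [Prod.fst_sum, Prod.fst_sum]
    simp
  · rw [Prod.snd_sum, Prod.snd_sum]
    simp

end Helpers

set_option linter.unusedSectionVars false
section Helpers
variable {K : Type*} [Field K] {A : Type*} [AddCommGroup A] [Module K A] [FiniteDimensional K A]
variable {ι : Type*} [Fintype ι] (b : Module.Basis ι K A)

lemma bij_part :
    Function.Bijective
      (TmL ((∑ i : ι, ((b i, 0) : A × Module.Dual K A) ⊗ₜ[K]
          ((0, b.coord i) : A × Module.Dual K A)) +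
        tau (∑ i : ι, ((b i, 0) : A × Module.Dual K A) ⊗ₜ[K]
          ((0, b.coord i) : A × Module.Dual K A)))) := by
  rw [Function.bijective_iff_has_inverse]
  refine ⟨fun v => v.2.comp (LinearMap.fst K A (Module.Dual K A))
      + (Module.Dual.eval K A v.1).comp (LinearMap.snd K A (Module.Dual K A)), ?_, ?_⟩
  · intro ζ
    rw [TmL_S_apply]
    apply LinearMap.ext
    rintro ⟨y, c⟩
    simp only [LinearMap.add_apply, LinearMap.coe_comp, Function.comp_apply,
      LinearMap.fst_apply, LinearMap.snd_apply, Module.Dual.eval_apply, map_sum,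
      LinearMap.smul_apply, smul_eq_mul, LinearMap.coe_sum, Finset.sum_apply,
      map_smul]
    have h1 : ∑ i : ι, ζ (b i, 0) * (b.coord i) y = ζ (y, 0) := by
      have := congrArg (fun f => f y)
        (b.sum_dual_apply_smul_coord (ζ.comp (LinearMap.inl K A (Module.Dual K A))))
      simpa [mul_comm] using this
    have h2 : ∑ i : ι, ζ (0, b.coord i) * c (b i) = ζ (0, c) := by
      have hp : ((0 : A), ∑ i : ι, c (b i) • b.coord i)
          = ∑ i : ι, (c (b i)) • (((0 : A), b.coord i) : A × Module.Dual K A) := by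
        refine Prod.ext ?_ ?_
        · rw [Prod.fst_sum]; simp
        · rw [Prod.snd_sum]; simp
      conv_rhs => rw [← b.sum_dual_apply_smul_coord c, hp]
      rw [map_sum]
      refine Finset.sum_congr rfl fun i _ => ?_
      rw [map_smul]
      simp [mul_comm]
    rw [h1, h2, ← map_add]
    simp
  · intro v
    obtain ⟨x, a⟩ := v
    rw [TmL_S_apply]
    simp only [LinearMap.add_apply, LinearMap.coe_comp, Function.comp_apply,
      LinearMap.fst_apply, LinearMap.snd_apply, Module.Dual.eval_apply, map_zero, zero_add,
      add_zero]
    rw [Prod.mk.injEq]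
    constructor
    · simpa [Module.Basis.coord_apply] using b.sum_repr x
    · exact b.sum_dual_apply_smul_coord a

end Helpers

/-- for an anti-dendriform bialgebra with double `D = A ⊕ A*` and
`r = Σᵢ eᵢ ⊗ eᵢ*`, the element `r + τ(r)` is invariant in `D`, `T_{r+τ(r)}` is a linear
isomorphism, and `r` solves the AD-YBE; hence the induced bialgebra is factorizable. -/
theorem stmt15 [FiniteDimensional K A]
    (sA pA : A →ₗ[K] A →ₗ[K] A) (hA : IsAntiDend sA pA)
    (sB pB : Module.Dual K A →ₗ[K] Module.Dual K A →ₗ[K] Module.Dual K A)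
    (hB : IsAntiDend sB pB)
    (hD : IsAntiDend (succD sA pA sB pB) (precD sA pA sB pB))
    {ι : Type*} [Fintype ι] (b : Module.Basis ι K A) :
    Invariant (succD sA pA sB pB) (precD sA pA sB pB)
      ((∑ i : ι, ((b i, 0) : A × Module.Dual K A) ⊗ₜ[K]
          ((0, b.coord i) : A × Module.Dual K A)) +
        tau (∑ i : ι, ((b i, 0) : A × Module.Dual K A) ⊗ₜ[K]
          ((0, b.coord i) : A × Module.Dual K A))) ∧
    Function.Bijective
      (TmL ((∑ i : ι, ((b i, 0) : A × Module.Dual K A) ⊗ₜ[K]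
          ((0, b.coord i) : A × Module.Dual K A)) +
        tau (∑ i : ι, ((b i, 0) : A × Module.Dual K A) ⊗ₜ[K]
          ((0, b.coord i) : A × Module.Dual K A)))) ∧
    AYBE (succD sA pA sB pB) (precD sA pA sB pB)
      (∑ i : ι, ((b i, 0) : A × Module.Dual K A) ⊗ₜ[K]
        ((0, b.coord i) : A × Module.Dual K A)) := by
  classical
  have htau : tau (∑ i : ι, ((b i, 0) : A × Module.Dual K A) ⊗ₜ[K]
        ((0, b.coord i) : A × Module.Dual K A))
      = ∑ i : ι, ((0, b.coord i) : A × Module.Dual K A) ⊗ₜ[K]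
        ((b i, 0) : A × Module.Dual K A) := by
    simp [tau, map_sum]
  set d : Module.Basis (ι ⊕ ι) K (A × Module.Dual K A) := b.prod b.dualBasis with hd
  refine ⟨?_, bij_part b, ?_⟩
  · rintro ⟨y, c⟩
    constructor
    · rw [htau, ← LinearEquiv.map_eq_zero_iff (Module.Basis.tensorProduct d d).repr]
      ext ⟨k, l⟩
      simp only [map_add, map_sum, TensorProduct.map_tmul, LinearMap.id_coe, id_eq,
        LinearMap.flip_apply, LinearMap.add_apply, succD_apply, precD_apply,
        Module.Basis.tensorProduct_repr_tmul_apply, Finsupp.add_apply, Finsupp.coe_add,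
        Finsupp.coe_zero, Pi.zero_apply, Finset.sum_apply, Finsupp.finset_sum_apply]
      rcases k with k | k <;> rcases l with l | l <;>
        simp only [hd, Module.Basis.prod_repr_inl, Module.Basis.prod_repr_inr, Module.Basis.dualBasis_repr,
          map_add, map_sub, map_zero, Finsupp.add_apply, Finsupp.sub_apply,
          map_neg, Finsupp.neg_apply, LinearMap.neg_apply, LinearMap.add_apply,
          LinearMap.zero_apply, Finsupp.coe_zero, Pi.zero_apply, zero_smul, smul_zero,
          zero_mul, mul_zero, add_zero, zero_add, sub_zero, zero_sub, Finset.sum_const_zero,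
          repr_RstarB, repr_LstarB, RstarA_pair, LstarA_pair,
          Module.Basis.coord_apply, Module.Basis.repr_self, Finsupp.single_apply, ite_smul, one_smul,
          smul_eq_mul, mul_ite, mul_one, ite_mul, one_mul, Finset.sum_ite_eq,
          Finset.sum_ite_eq', Finset.mem_univ, if_true] <;> ring
    · rw [htau, ← LinearEquiv.map_eq_zero_iff (Module.Basis.tensorProduct d d).repr]
      ext ⟨k, l⟩
      simp only [map_add, map_sum, TensorProduct.map_tmul, LinearMap.id_coe, id_eq,
        LinearMap.flip_apply, LinearMap.add_apply, succD_apply, precD_apply,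
        Module.Basis.tensorProduct_repr_tmul_apply, Finsupp.add_apply, Finsupp.coe_add,
        Finsupp.coe_zero, Pi.zero_apply, Finset.sum_apply, Finsupp.finset_sum_apply]
      rcases k with k | k <;> rcases l with l | l <;>
        simp only [hd, Module.Basis.prod_repr_inl, Module.Basis.prod_repr_inr, Module.Basis.dualBasis_repr,
          map_add, map_sub, map_zero, Finsupp.add_apply, Finsupp.sub_apply,
          map_neg, Finsupp.neg_apply, LinearMap.neg_apply, LinearMap.add_apply,
          LinearMap.zero_apply, Finsupp.coe_zero, Pi.zero_apply, zero_smul, smul_zero,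
          zero_mul, mul_zero, add_zero, zero_add, sub_zero, zero_sub, Finset.sum_const_zero,
          repr_RstarB, repr_LstarB, RstarA_pair, LstarA_pair,
          Module.Basis.coord_apply, Module.Basis.repr_self, Finsupp.single_apply, ite_smul, one_smul,
          smul_eq_mul, mul_ite, mul_one, ite_mul, one_mul, Finset.sum_ite_eq,
          Finset.sum_ite_eq', Finset.mem_univ, if_true] <;> ring
  · show adD _ _ _ = 0
    rw [adD]
    rw [TensorProduct.sum_tmul]
    simp only [TensorProduct.tmul_sum]
    rw [← LinearEquiv.map_eq_zero_iff
      (Module.Basis.tensorProduct d (Module.Basis.tensorProduct d d)).repr]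
    ext ⟨k, l, m⟩
    simp only [place1, place2, place3, map_add, map_sub, map_sum, LinearMap.coe_comp,
      Function.comp_apply, LinearEquiv.coe_coe, TensorProduct.tensorTensorTensorComm_tmul,
      TensorProduct.map_tmul, TensorProduct.lift.tmul, TensorProduct.leftComm_tmul,
      TensorProduct.assoc_tmul, TensorProduct.comm_tmul, TensorProduct.congr_tmul,
      LinearEquiv.refl_apply, LinearMap.id_coe, id_eq, LinearMap.add_apply,
      succD_apply, precD_apply,
      Module.Basis.tensorProduct_repr_tmul_apply, Finsupp.add_apply, Finsupp.sub_apply,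
      Finsupp.coe_add, Finsupp.coe_zero, Pi.zero_apply, Finset.sum_apply,
      Finsupp.finset_sum_apply]
    rcases k with k | k <;> rcases l with l | l <;> rcases m with m | m <;>
      simp only [hd, Module.Basis.prod_repr_inl, Module.Basis.prod_repr_inr, Module.Basis.dualBasis_repr,
        map_add, map_sub, map_zero, Finsupp.add_apply, Finsupp.sub_apply,
        map_neg, Finsupp.neg_apply, LinearMap.neg_apply, LinearMap.add_apply,
        LinearMap.zero_apply, Finsupp.coe_zero, Pi.zero_apply, zero_smul, smul_zero,
        zero_mul, mul_zero, add_zero, zero_add, sub_zero, zero_sub, Finset.sum_const_zero,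
        repr_RstarB, repr_LstarB, RstarA_pair, LstarA_pair,
        Module.Basis.coord_apply, Module.Basis.repr_self, Finsupp.single_apply, ite_smul, one_smul,
        smul_eq_mul, mul_ite, mul_one, ite_mul, one_mul, Finset.sum_ite_eq,
        Finset.sum_ite_eq', Finset.mem_univ, if_true, neg_zero, sub_self,
        Finset.sum_ite_irrel, ite_self] <;> ring
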